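/- Suppose a = 0, b ∈ C_j^{(N_2, r)} for some 0 ≤ j ≤ N_2 − 1, and Tr_{r/q}(c) ∈ C_k^{(N_2/d_2, q)} for some 0 ≤ k ≤ N_2/d_2 − 1. Then the Hamming weight of c(a, b, c) equals (q−1)n_1 n_2/q − (n_1/q) · Σ_{i=0}^{N_2/d_2 − 1} η_{N_0 i + j}^{(N_2, r)} η_{i + k}^{(N_2/d_2, q)} (equality after casting the weight into ℂ; indices read modulo N_2 and modulo N_2/d_2 respectively). -/

import Mathlib

/-- The canonical additive character `ψ(x) = e^{2πi·Tr_{F/F_p}(x)/p}` of a finite field `F`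
of characteristic `p`. -/
noncomputable def psi (p : ℕ) (F : Type*) [Field F] [Fintype F] [Algebra (ZMod p) F]
    (x : F) : ℂ :=
  Complex.exp (2 * (Real.pi : ℂ) * Complex.I * ((Algebra.trace (ZMod p) F x).val : ℂ) / (p : ℂ))

/-- The cyclotomic class `C_i^{(N,r)} = α^i ⟨α^N⟩` in a finite field. -/
def cClass (F : Type*) [Field F] (α : Fˣ) (N i : ℕ) : Set F :=
  {x | ∃ t : ℕ, x = ((α ^ (i + N * t) : Fˣ) : F)}

/-- The Gauss period `η_i^{(N,r)} = Σ_{x ∈ C_i^{(N,r)}} ψ(x)`. -/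
noncomputable def gaussPeriod (p : ℕ) (F : Type*) [Field F] [Fintype F] [Algebra (ZMod p) F]
    (α : Fˣ) (N i : ℕ) : ℂ :=
  ∑ t ∈ Finset.range ((Fintype.card F - 1) / N), psi p F ((α ^ (i + N * t) : Fˣ) : F)

open Finset

/-! ### Auxiliary lemmas -/

lemma sum_shift_periodic (f : ℕ → ℂ) (D : ℕ) (hf : ∀ t, f (t + D) = f t) (s : ℕ) :
    ∑ t ∈ range D, f (s + t) = ∑ t ∈ range D, f t := by
  induction s with
  | zero => simp
  | succ s ih =>
    have key : ∑ t ∈ range D, f (s + (t + 1)) = ∑ t ∈ range D, f (s + t) := by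
      have h1 := Finset.sum_range_succ' (fun t => f (s + t)) D
      have h2 := Finset.sum_range_succ (fun t => f (s + t)) D
      have h3 : f (s + D) = f (s + 0) := by rw [Nat.add_zero]; exact hf s
      rw [h2] at h1
      linear_combination h3 - h1
    calc ∑ t ∈ range D, f (s + 1 + t) = ∑ t ∈ range D, f (s + (t + 1)) := by
          apply Finset.sum_congr rfl; intro t _; congr 1; omega
    _ = ∑ t ∈ range D, f (s + t) := key
    _ = ∑ t ∈ range D, f t := ih

lemma sum_mul_periodic (f : ℕ → ℂ) (D : ℕ) (hf : ∀ t, f (t + D) = f t) (n : ℕ) :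
    ∑ t ∈ range (n * D), f t = n * ∑ t ∈ range D, f t := by
  induction n with
  | zero => simp
  | succ n ih =>
    rw [Nat.succ_mul, Finset.sum_range_add, ih, sum_shift_periodic f D hf (n * D)]
    push_cast; ring

lemma sum_range_mul_split (f : ℕ → ℂ) (n D : ℕ) :
    ∑ t ∈ range (n * D), f t = ∑ u ∈ range n, ∑ i ∈ range D, f (u * D + i) := by
  induction n with
  | zero => simp
  | succ n ih => rw [Nat.succ_mul, Finset.sum_range_add, ih, Finset.sum_range_succ]

lemma sum_pow_orderOf {G : Type*} [Group G] [Fintype G] (g : G) (f : G → ℂ) :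
    ∑ t ∈ range (orderOf g), f (g ^ t) =
      ∑ x ∈ (Set.toFinite ((Subgroup.zpowers g : Subgroup G) : Set G)).toFinset, f x := by
  refine Finset.sum_bij (fun t _ => g ^ t) (fun t _ => ?_) (fun t₁ h₁ t₂ h₂ h => ?_)
    (fun x hx => ?_) (fun t _ => rfl)
  · rw [Set.Finite.mem_toFinset]
    exact Subgroup.mem_zpowers_iff.mpr ⟨t, by rw [zpow_natCast]⟩
  · exact pow_injOn_Iio_orderOf (Finset.mem_range.mp h₁) (Finset.mem_range.mp h₂) h
  · rw [Set.Finite.mem_toFinset] at hx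
    obtain ⟨n, hn⟩ := (mem_powers_iff_mem_zpowers (x := g)).mpr hx
    exact ⟨n % orderOf g, Finset.mem_range.mpr (Nat.mod_lt _ (orderOf_pos g)),
      by simpa [pow_mod_orderOf] using hn⟩

lemma sum_pow_eq_of_zpowers_eq {G : Type*} [Group G] [Fintype G] {g h : G}
    (hgh : Subgroup.zpowers g = Subgroup.zpowers h) (f : G → ℂ) :
    ∑ t ∈ range (orderOf g), f (g ^ t) = ∑ t ∈ range (orderOf h), f (h ^ t) := by
  rw [sum_pow_orderOf g f, sum_pow_orderOf h f]
  apply Finset.sum_congr _ (fun _ _ => rfl)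
  ext x
  simp [Set.Finite.mem_toFinset, hgh]

lemma sum_units_gen {G : Type*} [Group G] [Fintype G] {g : G}
    (hg : ∀ x : G, x ∈ Subgroup.zpowers g) (f : G → ℂ) :
    ∑ t ∈ range (orderOf g), f (g ^ t) = ∑ x : G, f x := by
  rw [sum_pow_orderOf g f]
  apply Finset.sum_congr _ (fun _ _ => rfl)
  ext x
  simp [Set.Finite.mem_toFinset, hg x]

/-! ### The additive character -/

noncomputable def zetaP (p : ℕ) : ℂ := Complex.exp (2 * (Real.pi : ℂ) * Complex.I / (p : ℂ))

lemma zetaP_pow (p : ℕ) (hp : p ≠ 0) : (zetaP p) ^ p = 1 := by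
  have h : (p : ℂ) ≠ 0 := Nat.cast_ne_zero.mpr hp
  rw [zetaP, ← Complex.exp_nat_mul]
  rw [show (p : ℂ) * (2 * (Real.pi : ℂ) * Complex.I / (p : ℂ)) = 2 * Real.pi * Complex.I by
    field_simp]
  exact Complex.exp_two_pi_mul_I

lemma zetaP_pow_eq (p : ℕ) (v : ℕ) :
    (zetaP p) ^ v = Complex.exp (2 * (Real.pi : ℂ) * Complex.I * v / (p : ℂ)) := by
  rw [zetaP, ← Complex.exp_nat_mul]; congr 1; ring

lemma zetaP_pow_ne_one (p : ℕ) [Fact p.Prime] (v : ℕ) (h0 : ¬ (p ∣ v)) :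
    (zetaP p) ^ v ≠ 1 := by
  rw [zetaP_pow_eq]
  intro h
  rcases Complex.exp_eq_one_iff.mp h with ⟨n, hn⟩
  have hp : (p : ℂ) ≠ 0 := Nat.cast_ne_zero.mpr (Fact.out (p := p.Prime)).ne_zero
  have hπ : (Real.pi : ℂ) ≠ 0 := Complex.ofReal_ne_zero.mpr Real.pi_ne_zero
  have hne : 2 * (Real.pi : ℂ) * Complex.I ≠ 0 :=
    mul_ne_zero (mul_ne_zero two_ne_zero hπ) Complex.I_ne_zero
  have h2 : 2 * (Real.pi : ℂ) * Complex.I * v = 2 * Real.pi * Complex.I * (n * p) := by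
    have := (div_eq_iff hp).mp hn
    linear_combination this
  have h3 : (v : ℂ) = n * p := mul_left_cancel₀ hne h2
  have h4 : (v : ℤ) = n * p := by exact_mod_cast h3
  exact h0 (Int.natCast_dvd_natCast.mp ⟨n, by linarith⟩)

noncomputable def psiChar (p : ℕ) [Fact p.Prime] (F : Type*) [Field F] [Fintype F]
    [Algebra (ZMod p) F] : AddChar F ℂ :=
  haveI : NeZero p := ⟨(Fact.out (p := p.Prime)).ne_zero⟩
  (AddChar.zmodChar p (zetaP_pow p (Fact.out (p := p.Prime)).ne_zero)).compAddMonoidHom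
    (Algebra.trace (ZMod p) F).toAddMonoidHom

lemma psiChar_apply (p : ℕ) [Fact p.Prime] (F : Type*) [Field F] [Fintype F]
    [Algebra (ZMod p) F] (x : F) : psiChar p F x = psi p F x := by
  haveI : NeZero p := ⟨(Fact.out (p := p.Prime)).ne_zero⟩
  rw [psiChar, AddChar.compAddMonoidHom_apply, AddChar.zmodChar_apply, psi, zetaP_pow_eq]
  rfl

lemma psiChar_ne_one (p : ℕ) [Fact p.Prime] (K : Type*) [Field K] [Fintype K]
    [Algebra (ZMod p) K] : psiChar p K ≠ 1 := by
  haveI : NeZero p := ⟨(Fact.out (p := p.Prime)).ne_zero⟩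
  have : CharP K p := charP_of_injective_algebraMap (algebraMap (ZMod p) K).injective p
  have h1 : Module.Finite (ZMod p) K := Module.Finite.of_finite
  have hy : ∃ y : K, Algebra.trace (ZMod p) K y ≠ 0 := by
    by_contra h
    push_neg at h
    exact one_ne_zero ((traceForm_nondegenerate (ZMod p) K).1 1 (fun y => h _))
  rcases hy with ⟨y, hy⟩
  rw [AddChar.ne_one_iff]
  refine ⟨y, ?_⟩
  rw [psiChar, AddChar.compAddMonoidHom_apply, AddChar.zmodChar_apply]
  apply zetaP_pow_ne_one
  intro hdvd
  exact hy (by rw [← ZMod.val_eq_zero]; exact Nat.eq_zero_of_dvd_of_lt hdvd (ZMod.val_lt _))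

lemma psiChar_mul_trace (p : ℕ) [Fact p.Prime] (K F : Type*) [Field K] [Fintype K]
    [Field F] [Fintype F] [Algebra (ZMod p) K] [Algebra (ZMod p) F] [Algebra K F]
    (y : K) (x : F) :
    psiChar p K (y * Algebra.trace K F x) = psiChar p F (algebraMap K F y * x) := by
  haveI : NeZero p := ⟨(Fact.out (p := p.Prime)).ne_zero⟩
  haveI h0 : IsScalarTower (ZMod p) K F := IsScalarTower.of_algebraMap_eq'
    (RingHom.ext_zmod _ _)
  haveI h1 : Module.Finite (ZMod p) K := Module.Finite.of_finite
  haveI h2 : Module.Finite K F := Module.Finite.of_finite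
  have key : y * Algebra.trace K F x = Algebra.trace K F (algebraMap K F y * x) := by
    rw [← Algebra.smul_def, map_smul, smul_eq_mul]
  rw [key, psiChar, psiChar, AddChar.compAddMonoidHom_apply, AddChar.compAddMonoidHom_apply]
  congr 1
  simp only [LinearMap.toAddMonoidHom_coe]
  exact Algebra.trace_trace _

lemma sum_psiChar_mul (p : ℕ) [Fact p.Prime] (K : Type*) [Field K] [Fintype K]
    [DecidableEq K] [Algebra (ZMod p) K] (x : K) :
    ∑ y : K, psiChar p K (y * x) = if x = 0 then (Fintype.card K : ℂ) else 0 := by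
  split_ifs with h
  · simp [h]
  · have he := Equiv.sum_comp (Equiv.mulRight₀ x h) (fun y => psiChar p K y)
    simp only [Equiv.mulRight₀_apply] at he
    rw [he]
    exact AddChar.sum_eq_zero_of_ne_one (psiChar_ne_one p K)

lemma sum_field_split {K : Type*} [Field K] [Fintype K] [DecidableEq K] (f : K → ℂ) :
    ∑ y : K, f y = f 0 + ∑ y : Kˣ, f y := by
  rw [← Finset.sum_erase_add Finset.univ f (Finset.mem_univ 0), add_comm]
  congr 1
  refine (Finset.sum_bij (fun (y : Kˣ) _ => (y : K)) (fun y _ => ?_) (fun y₁ _ y₂ _ h => ?_)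
    (fun x hx => ?_) (fun y _ => rfl)).symm
  · exact Finset.mem_erase.mpr ⟨Units.ne_zero y, Finset.mem_univ _⟩
  · exact Units.ext h
  · rcases Finset.mem_erase.mp hx with ⟨hx0, -⟩
    exact ⟨Units.mk0 x hx0, Finset.mem_univ _, rfl⟩

lemma gp_general (p : ℕ) [Fact p.Prime] (L : Type*) [Field L] [Fintype L] [Algebra (ZMod p) L]
    (γ : Lˣ) (hord : orderOf γ = Fintype.card L - 1) (N D : ℕ) (hN : 0 < N)
    (hND : N * D = Fintype.card L - 1) (i s : ℕ) :
    ∑ t ∈ Finset.range D, psi p L ((γ ^ (i + N * (s + t)) : Lˣ) : L)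
      = gaussPeriod p L γ N i := by
  have hdiv : (Fintype.card L - 1) / N = D := by rw [← hND, Nat.mul_div_cancel_left _ hN]
  rw [gaussPeriod, hdiv]
  have hper : ∀ t, (fun t => psi p L ((γ ^ (i + N * t) : Lˣ) : L)) (t + D)
      = (fun t => psi p L ((γ ^ (i + N * t) : Lˣ) : L)) t := by
    intro t
    simp only
    rw [show i + N * (t + D) = (i + N * t) + N * D by ring, hND, pow_add, ← hord,
      pow_orderOf_eq_one, mul_one]
  exact sum_shift_periodic (fun t => psi p L ((γ ^ (i + N * t) : Lˣ) : L)) D hper s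

lemma gp_shift (p : ℕ) [Fact p.Prime] (L : Type*) [Field L] [Fintype L] [Algebra (ZMod p) L]
    (γ : Lˣ) (hord : orderOf γ = Fintype.card L - 1) (N D : ℕ) (hN : 0 < N)
    (hND : N * D = Fintype.card L - 1) (i s : ℕ) :
    gaussPeriod p L γ N (i + N * s) = gaussPeriod p L γ N i := by
  rw [← gp_general p L γ hord N D hN hND i s,
    ← gp_general p L γ hord N D hN hND (i + N * s) 0]
  apply Finset.sum_congr rfl
  intro t _
  rw [show i + N * s + N * (0 + t) = i + N * (s + t) by ring]
theorem stmt14 (p s m : ℕ) [Fact p.Prime] (hs : 0 < s) (hm : 0 < m)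
    (K F : Type*) [Field K] [Fintype K] [DecidableEq K] [Field F] [Fintype F]
    [Algebra (ZMod p) K] [Algebra (ZMod p) F] [Algebra K F]
    (hq : Fintype.card K = p ^ s) (hr : Fintype.card F = Fintype.card K ^ m)
    (α : Fˣ) (hα : ∀ x : Fˣ, x ∈ Subgroup.zpowers α)
    (β : Kˣ)
    (hβ : algebraMap K F (β : K)
        = ((α ^ ((Fintype.card F - 1) / (Fintype.card K - 1)) : Fˣ) : F))
    (g₁ g₂ : Fˣ) (n₁ n₂ : ℕ) (h₁ : orderOf g₁ = n₁) (h₂ : orderOf g₂ = n₂)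
    (hcop : Nat.Coprime n₁ n₂)
    (N₀ N₁ N₂ d₂ : ℕ)
    (hN₀ : N₀ = (Fintype.card F - 1) / (Fintype.card K - 1))
    (hN₁ : N₁ = (Fintype.card F - 1) / n₁)
    (hN₂ : N₂ = (Fintype.card F - 1) / n₂)
    (hd₂ : d₂ = Nat.gcd N₀ N₂)
    (a b c : F) (j k : ℕ) (hj : j < N₂) (hk : k < N₂ / d₂)
    (ha : a = 0) (hb : b ∈ cClass F α N₂ j)
    (hc : Algebra.trace K F c ∈ cClass K β (N₂ / d₂) k) :
    (hammingNorm (fun t : Fin (n₁ * n₂) =>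
        Algebra.trace K F (a * (g₁ : F) ^ (t : ℕ) + b * (g₂ : F) ^ (t : ℕ) + c)) : ℂ)
      = ((Fintype.card K : ℂ) - 1) * (n₁ : ℂ) * (n₂ : ℂ) / (Fintype.card K : ℂ)
        - ((n₁ : ℂ) / (Fintype.card K : ℂ))
          * ∑ i ∈ Finset.range (N₂ / d₂),
              gaussPeriod p F α N₂ (N₀ * i + j) * gaussPeriod p K β (N₂ / d₂) (i + k) := by
  subst ha
  letI : DecidableEq F := Classical.decEq F
  -- notation
  set q : ℕ := Fintype.card K with hqdef
  set r : ℕ := Fintype.card F with hrdef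
  set e : ℕ := N₂ / d₂ with hedef
  -- basic positivity and divisibility facts
  have hq2 : 1 < q := Fintype.one_lt_card
  have hr2 : 1 < r := Fintype.one_lt_card
  have hn₂pos : 0 < n₂ := h₂ ▸ orderOf_pos g₂
  have hn₁pos : 0 < n₁ := h₁ ▸ orderOf_pos g₁
  have horderα : orderOf α = r - 1 := by
    rw [orderOf_eq_card_of_forall_mem_zpowers hα, Nat.card_units, Nat.card_eq_fintype_card]
  have hn₂dvd : n₂ ∣ r - 1 := by
    have := orderOf_dvd_natCard g₂
    rwa [h₂, Nat.card_units, Nat.card_eq_fintype_card] at this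
  have hN₂n₂ : N₂ * n₂ = r - 1 := by rw [hN₂]; exact Nat.div_mul_cancel hn₂dvd
  have hN₂pos : 0 < N₂ := by
    rcases Nat.eq_zero_or_pos N₂ with h | h
    · rw [h, zero_mul] at hN₂n₂; omega
    · exact h
  have hN₂dvd : N₂ ∣ r - 1 := ⟨n₂, hN₂n₂.symm⟩
  have hq1dvd : (q - 1) ∣ r - 1 := by
    have := Nat.sub_dvd_pow_sub_pow q 1 m
    simpa [hr] using this
  have hN₀q1 : N₀ * (q - 1) = r - 1 := by rw [hN₀]; exact Nat.div_mul_cancel hq1dvd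
  have hN₀pos : 0 < N₀ := by
    rcases Nat.eq_zero_or_pos N₀ with h | h
    · rw [h, zero_mul] at hN₀q1; omega
    · exact h
  have hN₀dvd : N₀ ∣ r - 1 := ⟨q - 1, hN₀q1.symm⟩
  have hd₂dvdN₂ : d₂ ∣ N₂ := hd₂ ▸ Nat.gcd_dvd_right N₀ N₂
  have hd₂dvdN₀ : d₂ ∣ N₀ := hd₂ ▸ Nat.gcd_dvd_left N₀ N₂
  have hd₂pos : 0 < d₂ := Nat.pos_of_dvd_of_pos hd₂dvdN₂ hN₂pos
  have hepos : 0 < e := Nat.div_pos (Nat.le_of_dvd hN₂pos hd₂dvdN₂) hd₂pos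
  have hNe : N₀ * e = N₂ * (N₀ / d₂) := by
    rw [hedef, ← Nat.mul_div_assoc N₀ hd₂dvdN₂, ← Nat.mul_div_assoc N₂ hd₂dvdN₀,
      mul_comm N₀ N₂]
  have hN₀e_dvd : N₀ * e ∣ r - 1 := by
    have hlcm : Nat.lcm N₀ N₂ ∣ r - 1 := Nat.lcm_dvd hN₀dvd hN₂dvd
    have : N₀ * e = Nat.lcm N₀ N₂ := by
      rw [hedef, Nat.lcm, ← hd₂, Nat.mul_div_assoc N₀ hd₂dvdN₂]
    rwa [this]
  have hedvd : e ∣ q - 1 := by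
    have : N₀ * e ∣ N₀ * (q - 1) := by rwa [hN₀q1]
    exact (mul_dvd_mul_iff_left hN₀pos.ne').mp this
  set fq : ℕ := (q - 1) / e with hfqdef
  have hefq : e * fq = q - 1 := Nat.mul_div_cancel' hedvd
  -- order of β
  have hβu : Units.map (algebraMap K F : K →* F) β = α ^ N₀ := by
    apply Units.ext
    rw [Units.coe_map]
    simpa [hN₀] using hβ
  have hinj : Function.Injective (Units.map (algebraMap K F : K →* F)) :=
    Units.map_injective (algebraMap K F).injective
  have horderβ : orderOf β = q - 1 := by
    have := orderOf_injective (Units.map (algebraMap K F : K →* F)) hinj β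
    rw [hβu] at this
    rw [← this, orderOf_pow, horderα, Nat.gcd_eq_right hN₀dvd]
    rw [← hN₀q1, Nat.mul_div_cancel_left _ hN₀pos]
  have hβgen : ∀ x : Kˣ, x ∈ Subgroup.zpowers β := by
    have : Subgroup.zpowers β = ⊤ := by
      apply Subgroup.eq_top_of_card_eq
      rw [Nat.card_zpowers, horderβ, Nat.card_eq_fintype_card, Fintype.card_units]
    intro x; rw [this]; exact Subgroup.mem_top x
  -- g₂ and α^N₂ generate the same subgroup
  have horderαN₂ : orderOf (α ^ N₂ : Fˣ) = n₂ := by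
    rw [orderOf_pow, horderα, Nat.gcd_eq_right hN₂dvd, ← hN₂n₂,
      Nat.mul_div_cancel_left _ hN₂pos]
  have hzp : Subgroup.zpowers g₂ = Subgroup.zpowers (α ^ N₂ : Fˣ) := by
    obtain ⟨z, hz⟩ := Subgroup.mem_zpowers_iff.mp (hα g₂)
    have hr1ne : ((r - 1 : ℕ) : ℤ) ≠ 0 := by
      exact_mod_cast (by omega : (r - 1 : ℕ) ≠ 0)
    set u : ℕ := (z % ((r - 1 : ℕ) : ℤ)).toNat with hudef
    have hu : α ^ u = g₂ := by
      have h5 : α ^ ((u : ℤ)) = α ^ z := by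
        rw [hudef, Int.toNat_of_nonneg (Int.emod_nonneg z hr1ne), ← horderα]
        exact zpow_mod_orderOf α z
      rw [← hz, ← h5, zpow_natCast]
    have hgcd : Nat.gcd (r - 1) u = N₂ := by
      have h6 : orderOf (α ^ u : Fˣ) = n₂ := by rw [hu, h₂]
      rw [orderOf_pow, horderα] at h6
      have hgd : Nat.gcd (r - 1) u ∣ r - 1 := Nat.gcd_dvd_left _ _
      have h7 : r - 1 = Nat.gcd (r - 1) u * n₂ := Nat.eq_mul_of_div_eq_right hgd h6
      have h8 : N₂ * n₂ = Nat.gcd (r - 1) u * n₂ := by rw [hN₂n₂]; exact h7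
      exact (Nat.eq_of_mul_eq_mul_right hn₂pos h8).symm
    have hN₂u : N₂ ∣ u := hgcd ▸ Nat.gcd_dvd_right (r - 1) u
    obtain ⟨w, hw⟩ := hN₂u
    have hmem : g₂ ∈ Subgroup.zpowers (α ^ N₂ : Fˣ) :=
      Subgroup.mem_zpowers_iff.mpr ⟨(w : ℤ), by rw [zpow_natCast, ← pow_mul, ← hw, hu]⟩
    have hle : Subgroup.zpowers g₂ ≤ Subgroup.zpowers (α ^ N₂ : Fˣ) := by
      rw [Subgroup.zpowers_le]
      exact hmem
    exact Subgroup.eq_of_le_of_card_ge hle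
      (by rw [Nat.card_zpowers, Nat.card_zpowers, horderαN₂, h₂])
  -- tower instances
  haveI : IsScalarTower (ZMod p) K F := IsScalarTower.of_algebraMap_eq' (RingHom.ext_zmod _ _)
  haveI : Module.Finite (ZMod p) K := Module.Finite.of_finite
  haveI : Module.Finite K F := Module.Finite.of_finite
  have hq0 : (q : ℂ) ≠ 0 := Nat.cast_ne_zero.mpr (by omega)
  -- the inner character sum over t
  obtain ⟨t₀, hb₀⟩ := hb
  obtain ⟨v₀, hc₀⟩ := hc
  have hinner : ∀ l : ℕ,
      (∑ t ∈ range (n₁ * n₂),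
          psiChar p F (algebraMap K F ((β ^ l : Kˣ) : K) * (b * (g₂ : F) ^ t)))
        = (n₁ : ℂ) * gaussPeriod p F α N₂ (N₀ * l + j) := by
    intro l
    have hyl : algebraMap K F ((β ^ l : Kˣ) : K) = ((α ^ (N₀ * l) : Fˣ) : F) := by
      rw [Units.val_pow_eq_pow_val, map_pow, hβ, ← hN₀, ← Units.val_pow_eq_pow_val, ← pow_mul]
    have harg : ∀ t : ℕ, algebraMap K F ((β ^ l : Kˣ) : K) * (b * (g₂ : F) ^ t)
        = ((α ^ (N₀ * l + (j + N₂ * t₀)) * g₂ ^ t : Fˣ) : F) := by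
      intro t
      rw [hyl, hb₀]
      simp only [Units.val_mul, Units.val_pow_eq_pow_val, pow_add]
      ring
    simp only [harg]
    have hper : ∀ t : ℕ,
        psiChar p F ((α ^ (N₀ * l + (j + N₂ * t₀)) * g₂ ^ (t + n₂) : Fˣ) : F)
        = psiChar p F ((α ^ (N₀ * l + (j + N₂ * t₀)) * g₂ ^ t : Fˣ) : F) := by
      intro t
      rw [← h₂, pow_add g₂ t (orderOf g₂), pow_orderOf_eq_one, mul_one]
    rw [sum_mul_periodic (fun t => psiChar p F ((α ^ (N₀ * l + (j + N₂ * t₀)) * g₂ ^ t : Fˣ) : F))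
      n₂ hper n₁]
    congr 1
    have e1 : ∑ t ∈ range n₂,
        psiChar p F ((α ^ (N₀ * l + (j + N₂ * t₀)) * g₂ ^ t : Fˣ) : F)
        = ∑ t ∈ range n₂,
          psiChar p F ((α ^ (N₀ * l + (j + N₂ * t₀)) * (α ^ N₂ : Fˣ) ^ t : Fˣ) : F) := by
      rw [← h₂, sum_pow_eq_of_zpowers_eq hzp
        (fun w => psiChar p F ((α ^ (N₀ * l + (j + N₂ * t₀)) * w : Fˣ) : F)), horderαN₂, h₂]
    rw [e1]
    have e2 : ∀ t : ℕ, (α ^ (N₀ * l + (j + N₂ * t₀)) * (α ^ N₂ : Fˣ) ^ t : Fˣ)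
        = α ^ ((N₀ * l + j) + N₂ * (t₀ + t)) := by
      intro t
      rw [← pow_mul, ← pow_add]
      congr 1
      ring
    calc ∑ t ∈ range n₂, psiChar p F ((α ^ (N₀ * l + (j + N₂ * t₀)) * (α ^ N₂ : Fˣ) ^ t : Fˣ) : F)
        = ∑ t ∈ range n₂, psi p F ((α ^ ((N₀ * l + j) + N₂ * (t₀ + t)) : Fˣ) : F) := by
          refine Finset.sum_congr rfl fun t _ => ?_
          rw [e2 t, psiChar_apply]
    _ = gaussPeriod p F α N₂ (N₀ * l + j) :=
        gp_general p F α horderα N₂ n₂ hN₂pos hN₂n₂ (N₀ * l + j) t₀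
  -- the total sum S
  set TrBC : ℕ → K := fun t => Algebra.trace K F (b * (g₂ : F) ^ t + c) with hTrBC
  -- reduce the Hamming weight to a character sum
  have hfun : (fun t : Fin (n₁ * n₂) =>
      Algebra.trace K F (0 * (g₁ : F) ^ (t : ℕ) + b * (g₂ : F) ^ (t : ℕ) + c))
      = fun t : Fin (n₁ * n₂) => TrBC (t : ℕ) := by
    funext t
    rw [hTrBC, zero_mul, zero_add]
  rw [hfun]
  have hnorm : ((hammingNorm fun t : Fin (n₁ * n₂) => TrBC (t : ℕ)) : ℂ)
      = ∑ t ∈ range (n₁ * n₂), (if TrBC t = 0 then (0 : ℂ) else 1) := by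
    rw [hammingNorm, Finset.card_filter, Nat.cast_sum,
      ← Fin.sum_univ_eq_sum_range (fun u => if TrBC u = 0 then (0 : ℂ) else 1) (n₁ * n₂)]
    refine Finset.sum_congr rfl fun t _ => ?_
    by_cases h : TrBC (t : ℕ) = 0 <;> simp [h]
  have hind : ∀ x : K, (if x = 0 then (0 : ℂ) else 1)
      = 1 - (q : ℂ)⁻¹ * ∑ y : K, psiChar p K (y * x) := by
    intro x
    rw [sum_psiChar_mul]
    split_ifs with h
    · rw [inv_mul_cancel₀ hq0]; ring
    · ring
  rw [hnorm]
  have hW2 : ∑ t ∈ range (n₁ * n₂), (if TrBC t = 0 then (0 : ℂ) else 1)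
      = (n₁ * n₂ : ℕ) - (q : ℂ)⁻¹ *
        ∑ t ∈ range (n₁ * n₂), ∑ y : K, psiChar p K (y * TrBC t) := by
    simp only [hind]
    rw [Finset.sum_sub_distrib, Finset.sum_const, Finset.card_range, ← Finset.mul_sum]
    simp [nsmul_eq_mul]
  rw [hW2]
  -- compute the double character sum
  have hS : ∑ t ∈ range (n₁ * n₂), ∑ y : K, psiChar p K (y * TrBC t)
      = (n₁ * n₂ : ℕ) + ∑ y : Kˣ, ∑ t ∈ range (n₁ * n₂), psiChar p K ((y : K) * TrBC t) := by
    rw [Finset.sum_comm, sum_field_split (fun y => ∑ t ∈ range (n₁ * n₂), psiChar p K (y * TrBC t))]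
    congr 1
    simp [AddChar.map_zero_eq_one]
  rw [hS]
  -- pointwise split of the character value
  have hpt : ∀ (y : K) (t : ℕ), psiChar p K (y * TrBC t)
      = psiChar p F (algebraMap K F y * (b * (g₂ : F) ^ t))
        * psiChar p K (y * Algebra.trace K F c) := by
    intro y t
    rw [hTrBC]
    simp only
    rw [map_add, mul_add, AddChar.map_add_eq_mul, psiChar_mul_trace]
  have hT : ∑ y : Kˣ, ∑ t ∈ range (n₁ * n₂), psiChar p K ((y : K) * TrBC t)
      = (n₁ : ℂ) * ∑ i ∈ range e,
          gaussPeriod p F α N₂ (N₀ * i + j) * gaussPeriod p K β e (i + k) := by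
    have step1 : ∀ y : Kˣ, ∑ t ∈ range (n₁ * n₂), psiChar p K ((y : K) * TrBC t)
        = (∑ t ∈ range (n₁ * n₂), psiChar p F (algebraMap K F (y : K) * (b * (g₂ : F) ^ t)))
          * psiChar p K ((y : K) * Algebra.trace K F c) := by
      intro y
      simp only [hpt]
      rw [← Finset.sum_mul]
    calc ∑ y : Kˣ, ∑ t ∈ range (n₁ * n₂), psiChar p K ((y : K) * TrBC t)
        = ∑ y : Kˣ, (∑ t ∈ range (n₁ * n₂),
            psiChar p F (algebraMap K F (y : K) * (b * (g₂ : F) ^ t)))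
            * psiChar p K ((y : K) * Algebra.trace K F c) :=
          Finset.sum_congr rfl fun y _ => step1 y
      _ = ∑ l ∈ range (q - 1), (∑ t ∈ range (n₁ * n₂),
            psiChar p F (algebraMap K F ((β ^ l : Kˣ) : K) * (b * (g₂ : F) ^ t)))
            * psiChar p K (((β ^ l : Kˣ) : K) * Algebra.trace K F c) := by
          rw [← horderβ]
          exact (sum_units_gen hβgen _).symm
      _ = ∑ l ∈ range (q - 1), (n₁ : ℂ) * gaussPeriod p F α N₂ (N₀ * l + j)
            * psiChar p K (((β ^ l : Kˣ) : K) * Algebra.trace K F c) := by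
          refine Finset.sum_congr rfl fun l _ => ?_
          rw [hinner l]
      _ = ∑ u ∈ range fq, ∑ i ∈ range e, (n₁ : ℂ) * gaussPeriod p F α N₂ (N₀ * (u * e + i) + j)
            * psiChar p K (((β ^ (u * e + i) : Kˣ) : K) * Algebra.trace K F c) := by
          rw [show q - 1 = fq * e by rw [mul_comm fq e]; exact hefq.symm]
          exact sum_range_mul_split _ fq e
      _ = ∑ i ∈ range e, ∑ u ∈ range fq, (n₁ : ℂ) * gaussPeriod p F α N₂ (N₀ * (u * e + i) + j)
            * psiChar p K (((β ^ (u * e + i) : Kˣ) : K) * Algebra.trace K F c) :=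
          Finset.sum_comm
      _ = ∑ i ∈ range e, (n₁ : ℂ) * gaussPeriod p F α N₂ (N₀ * i + j)
            * gaussPeriod p K β e (i + k) := by
          refine Finset.sum_congr rfl fun i _ => ?_
          have hgpf : ∀ u : ℕ, gaussPeriod p F α N₂ (N₀ * (u * e + i) + j)
              = gaussPeriod p F α N₂ (N₀ * i + j) := by
            intro u
            rw [show N₀ * (u * e + i) + j = (N₀ * i + j) + (N₀ * e) * u by ring, hNe,
              mul_assoc]
            exact gp_shift p F α horderα N₂ n₂ hN₂pos hN₂n₂ (N₀ * i + j) (N₀ / d₂ * u)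
          have hQK : ∀ u : ℕ, psiChar p K (((β ^ (u * e + i) : Kˣ) : K) * Algebra.trace K F c)
              = psi p K ((β ^ ((i + k) + e * (v₀ + u)) : Kˣ) : K) := by
            intro u
            rw [hc₀, ← Units.val_mul, ← pow_add,
              show u * e + i + (k + e * v₀) = (i + k) + e * (v₀ + u) by ring, psiChar_apply]
          simp only [hgpf, hQK]
          rw [← Finset.mul_sum,
            gp_general p K β horderβ e fq hepos hefq (i + k) v₀]
      _ = (n₁ : ℂ) * ∑ i ∈ range e,
            gaussPeriod p F α N₂ (N₀ * i + j) * gaussPeriod p K β e (i + k) := by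
          rw [Finset.mul_sum]
          exact Finset.sum_congr rfl fun i _ => by ring
  rw [hT]
  have hn : ((n₁ * n₂ : ℕ) : ℂ) = (n₁ : ℂ) * (n₂ : ℂ) := by push_cast; ring
  rw [hn]
  field_simp
  ring
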